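/- A convex spherical polyhedron P ⊆ S^n that is an intersection of finitely many hemispheres and all of whose dihedral angles are at most π/2 has at most n+1 facets. -/
import Mathlib


open RealInnerProductSpace

/-- An acute convex spherical polyhedron `P = ∩ᵢ {x ∈ Sⁿ : ⟪x, uᵢ⟫ ≥ 0}` (the
outward normals `uᵢ` being distinct unit vectors with pairwise nonpositive
inner products) whose interior is nonempty (there is a unit vector with
strictly positive inner product with every `uᵢ`) has at most `n+1` facets. -/
theorem acute_spherical_polyhedron_facets {n m : ℕ}
    (u : Fin m → EuclideanSpace ℝ (Fin (n + 1)))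
    (hu : ∀ i, ‖u i‖ = 1) (hinj : Function.Injective u)
    (hobt : ∀ i j, i ≠ j → ⟪u i, u j⟫ ≤ 0)
    (hint : ∃ x : EuclideanSpace ℝ (Fin (n + 1)), ‖x‖ = 1 ∧ ∀ i, 0 < ⟪x, u i⟫) :
    m ≤ n + 1 := by
  obtain ⟨x, hx, hxpos⟩ := hint
  have hli : LinearIndependent ℝ u := by
    rw [Fintype.linearIndependent_iff]
    intro g hg i
    set p : Fin m → ℝ := fun i => max (g i) 0 with hp
    set q : Fin m → ℝ := fun i => max (-g i) 0 with hq
    have hpnn : ∀ i, 0 ≤ p i := fun i => le_max_right _ _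
    have hqnn : ∀ i, 0 ≤ q i := fun i => le_max_right _ _
    have hpq : ∀ i, p i - q i = g i := fun i => max_zero_sub_max_neg_zero_eq_self (g i)
    have hpqz : ∀ i, p i * q i = 0 := by
      intro i
      rcases le_total (g i) 0 with h | h
      · have : p i = 0 := max_eq_right h
        simp [this]
      · have : q i = 0 := max_eq_right (by linarith)
        simp [this]
    set v : EuclideanSpace ℝ (Fin (n + 1)) := ∑ i, p i • u i with hv
    have hv2 : ∑ i, q i • u i = v := by
      have : ∑ i, (p i - q i) • u i = 0 := by
        rw [show (fun i => (p i - q i) • u i) = fun i => g i • u i by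
          funext i; rw [hpq]]
        exact hg
      simp only [sub_smul, Finset.sum_sub_distrib] at this
      rw [hv]
      linear_combination (norm := abel) -this
    have hvv : ⟪v, v⟫ ≤ 0 := by
      rw [show ⟪v, v⟫ = ⟪(∑ i, p i • u i), (∑ i, q i • u i)⟫ from by
        conv_rhs => rw [hv2]]
      rw [sum_inner]
      apply Finset.sum_nonpos
      intro i _
      rw [inner_sum]
      apply Finset.sum_nonpos
      intro j _
      rw [real_inner_smul_left, real_inner_smul_right]
      rcases eq_or_ne i j with rfl | hij
      · rw [← mul_assoc, hpqz i, zero_mul]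
      · exact mul_nonpos_of_nonneg_of_nonpos (hpnn i)
          (mul_nonpos_of_nonneg_of_nonpos (hqnn j) (hobt i j hij))
    have hv0 : v = 0 := by
      have := real_inner_self_nonneg (x := v)
      exact inner_self_eq_zero.mp (le_antisymm hvv this)
    have hxp : ∑ i, p i * ⟪x, u i⟫ = 0 := by
      have : ⟪x, v⟫ = 0 := by rw [hv0, inner_zero_right]
      rw [hv, inner_sum] at this
      simp only [real_inner_smul_right] at this
      exact this
    have hxq : ∑ i, q i * ⟪x, u i⟫ = 0 := by
      have : ⟪x, ∑ i, q i • u i⟫ = 0 := by rw [hv2, hv0, inner_zero_right]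
      rw [inner_sum] at this
      simp only [real_inner_smul_right] at this
      exact this
    have hpi : p i = 0 := by
      have h := (Finset.sum_eq_zero_iff_of_nonneg (fun j _ =>
        mul_nonneg (hpnn j) (le_of_lt (hxpos j)))).mp hxp i (Finset.mem_univ i)
      exact (mul_eq_zero.mp h).resolve_right (ne_of_gt (hxpos i))
    have hqi : q i = 0 := by
      have h := (Finset.sum_eq_zero_iff_of_nonneg (fun j _ =>
        mul_nonneg (hqnn j) (le_of_lt (hxpos j)))).mp hxq i (Finset.mem_univ i)
      exact (mul_eq_zero.mp h).resolve_right (ne_of_gt (hxpos i))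
    have := hpq i
    rw [hpi, hqi] at this
    linarith
  have hcard := hli.fintype_card_le_finrank
  simpa [finrank_euclideanSpace_fin] using hcard
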